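/- Let X be a smooth reflexive real Banach space and let T be a compact linear operator from X to X with operator norm 1 that is a smooth point of the space of compact operators on X (with the operator norm). Then either the range of T is one-dimensional, or T is not a right-symmetric point of the space of compact operators on X. -/

import Mathlib

/-- Birkhoff–James orthogonality: `x ⊥_B y` iff `‖x + λ • y‖ ≥ ‖x‖` for every real `λ`. -/
def BJOrth {E : Type*} [NormedAddCommGroup E] [NormedSpace ℝ E] (x y : E) : Prop :=
  ∀ lam : ℝ, ‖x‖ ≤ ‖x + lam • y‖

/-- `x` is a left-symmetric point: `x ⊥_B y` implies `y ⊥_B x` for all `y`. -/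
def LeftSymmetricPt {E : Type*} [NormedAddCommGroup E] [NormedSpace ℝ E] (x : E) : Prop :=
  ∀ y : E, BJOrth x y → BJOrth y x

/-- `x` is a right-symmetric point: `y ⊥_B x` implies `x ⊥_B y` for all `y`. -/
def RightSymmetricPt {E : Type*} [NormedAddCommGroup E] [NormedSpace ℝ E] (x : E) : Prop :=
  ∀ y : E, BJOrth y x → BJOrth x y

/-- A nonzero `x` is a smooth point if there is exactly one norm-one continuous linear
functional `f` with `f x = ‖x‖`. -/
def SmoothPoint {E : Type*} [NormedAddCommGroup E] [NormedSpace ℝ E] (x : E) : Prop :=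
  ∃! f : E →L[ℝ] ℝ, ‖f‖ = 1 ∧ f x = ‖x‖

/-- A normed space is reflexive if the canonical embedding into the double dual is onto. -/
def ReflexiveSpace (E : Type*) [NormedAddCommGroup E] [NormedSpace ℝ E] : Prop :=
  Function.Surjective (NormedSpace.inclusionInDoubleDual ℝ E)

/-- `T` (a compact operator) is a right-symmetric point of the space of compact operators
(with the operator norm): `A ⊥_B T` implies `T ⊥_B A` for every compact operator `A`. -/
def RightSymmetricCompactOp {X Y : Type*} [NormedAddCommGroup X] [NormedSpace ℝ X]
    [NormedAddCommGroup Y] [NormedSpace ℝ Y] (T : X →L[ℝ] Y) : Prop :=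
  ∀ A : X →L[ℝ] Y, IsCompactOperator A → BJOrth A T → BJOrth T A

/-- `T` is left orthogonality preserving at `x`: `x ⊥_B y` implies `T x ⊥_B T y`. -/
def LeftOPAt {X Y : Type*} [NormedAddCommGroup X] [NormedSpace ℝ X]
    [NormedAddCommGroup Y] [NormedSpace ℝ Y] (T : X →L[ℝ] Y) (x : X) : Prop :=
  ∀ y : X, BJOrth x y → BJOrth (T x) (T y)

/-- Approximate Birkhoff–James orthogonality in the sense of Dragomir–Chmieliński:
`x ⊥_D^ε y` iff `‖x + λ • y‖ ≥ √(1 - ε²) * ‖x‖` for every real `λ`. -/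
def ApproxOrthD {E : Type*} [NormedAddCommGroup E] [NormedSpace ℝ E]
    (ε : ℝ) (x y : E) : Prop :=
  ∀ lam : ℝ, Real.sqrt (1 - ε ^ 2) * ‖x‖ ≤ ‖x + lam • y‖

/-- Approximate Birkhoff–James orthogonality in the sense of Chmieliński:
`x ⊥_B^ε y` iff `‖x + λ • y‖² ≥ ‖x‖² - 2ε‖x‖‖λ • y‖` for every real `λ`. -/
def ApproxOrthC {E : Type*} [NormedAddCommGroup E] [NormedSpace ℝ E]
    (ε : ℝ) (x y : E) : Prop :=
  ∀ lam : ℝ, ‖x‖ ^ 2 - 2 * ε * ‖x‖ * ‖lam • y‖ ≤ ‖x + lam • y‖ ^ 2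

/-- The subspace of `X →L[ℝ] Y` consisting of all compact operators, normed with the
(restricted) operator norm. -/
noncomputable def compactOperators (X Y : Type*) [NormedAddCommGroup X] [NormedSpace ℝ X]
    [NormedAddCommGroup Y] [NormedSpace ℝ Y] : Submodule ℝ (X →L[ℝ] Y) where
  carrier := {T | IsCompactOperator T}
  add_mem' hf hg := hf.add hg
  zero_mem' := isCompactOperator_zero
  smul_mem' c _ hf := hf.smul c


section AuxiliaryLemmas

open NormedSpace Metric

theorem bj_exists_norming' {E : Type*} [NormedAddCommGroup E] [NormedSpace ℝ E]
    {x y : E} (hx : x ≠ 0) (h : BJOrth x y) :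
    ∃ f : E →L[ℝ] ℝ, ‖f‖ = 1 ∧ f x = ‖x‖ ∧ f y = 0 := by
  classical
  set N : Submodule ℝ E := (Submodule.span ℝ {y}).topologicalClosure with hN
  haveI hNc : IsClosed (N : Set E) := Submodule.isClosed_topologicalClosure _
  have hkey : ∀ n ∈ N, ‖x‖ ≤ ‖x + n‖ := by
    have hclosed : IsClosed {z : E | ‖x‖ ≤ ‖x + z‖} :=
      isClosed_le continuous_const ((continuous_const.add continuous_id).norm)
    have hspan : (Submodule.span ℝ {y} : Set E) ⊆ {z : E | ‖x‖ ≤ ‖x + z‖} := by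
      intro n hn
      obtain ⟨a, rfl⟩ := Submodule.mem_span_singleton.mp hn
      exact h a
    intro n hn
    have hsub : (N : Set E) ⊆ {z : E | ‖x‖ ≤ ‖x + z‖} := by
      rw [hN, Submodule.topologicalClosure_coe]
      exact closure_minimal hspan hclosed
    exact hsub hn
  let π : E →L[ℝ] (E ⧸ N) :=
    N.mkQ.mkContinuous 1 (fun m => by
      simpa using Submodule.Quotient.norm_mk_le N m)
  have hπ : ∀ m : E, π m = Submodule.Quotient.mk m := fun m => rfl
  have hnorm_le : ‖π x‖ ≤ ‖x‖ := by
    simpa [hπ] using Submodule.Quotient.norm_mk_le N x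
  have hnorm_ge : ‖x‖ ≤ ‖π x‖ := by
    by_contra hlt
    push_neg at hlt
    obtain ⟨m, hm, hmlt⟩ := Submodule.Quotient.norm_mk_lt (π x : E ⧸ N)
      (show (0:ℝ) < ‖x‖ - ‖π x‖ by linarith)
    have hmem : m - x ∈ N := by
      rw [hπ] at hm
      exact (Submodule.Quotient.eq N).mp hm
    have : ‖x‖ ≤ ‖m‖ := by
      have := hkey (m - x) hmem
      simpa [add_sub_cancel] using this
    linarith
  have hnorm : ‖π x‖ = ‖x‖ := le_antisymm hnorm_le hnorm_ge
  have hπx : π x ≠ 0 := by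
    intro h0
    apply hx
    rw [← norm_eq_zero, ← hnorm, h0, norm_zero]
  obtain ⟨g, hg1, hg2⟩ := exists_dual_vector ℝ (π x) (norm_ne_zero_iff.mpr hπx)
  refine ⟨g.comp π, ?_, ?_, ?_⟩
  · apply le_antisymm
    · refine ContinuousLinearMap.opNorm_le_bound _ zero_le_one (fun z => ?_)
      calc ‖g (π z)‖ ≤ ‖g‖ * ‖π z‖ := g.le_opNorm _
        _ ≤ 1 * ‖z‖ := by
            rw [hg1, one_mul, one_mul]
            simpa [hπ] using Submodule.Quotient.norm_mk_le N z
    · have hb := (g.comp π).le_opNorm x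
      have hval : (g.comp π) x = ‖x‖ := by
        simp only [ContinuousLinearMap.comp_apply]
        rw [hg2, hnorm]; simp [RCLike.ofReal_real_eq_id]
      rw [hval] at hb
      have hxpos : (0:ℝ) < ‖x‖ := norm_pos_iff.mpr hx
      have : ‖(‖x‖ : ℝ)‖ = ‖x‖ := by
        rw [Real.norm_eq_abs, abs_of_nonneg (norm_nonneg x)]
      rw [this] at hb
      exact le_of_mul_le_mul_right (by simpa [one_mul] using hb) hxpos
  · simp only [ContinuousLinearMap.comp_apply]
    rw [hg2, hnorm]; simp [RCLike.ofReal_real_eq_id]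
  · have hyN : y ∈ N := by
      rw [hN]
      exact Submodule.le_topologicalClosure _ (Submodule.mem_span_singleton_self y)
    simp only [ContinuousLinearMap.comp_apply, hπ]
    rw [(Submodule.Quotient.mk_eq_zero N).mpr hyN, map_zero]

theorem bj_exists_min' {E : Type*} [NormedAddCommGroup E] [NormedSpace ℝ E]
    (v u : E) (hu : u ≠ 0) : ∃ t : ℝ, BJOrth (v + t • u) u := by
  have hupos : (0:ℝ) < ‖u‖ := norm_pos_iff.mpr hu
  set R : ℝ := (2 * ‖v‖ + ‖u‖) / ‖u‖ with hR
  have hRpos : 0 < R := by positivity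
  have hcont : Continuous fun t : ℝ => ‖v + t • u‖ :=
    (continuous_const.add (continuous_id.smul continuous_const)).norm
  obtain ⟨t0, ht0mem, ht0min⟩ :=
    (isCompact_Icc (a := -R) (b := R)).exists_isMinOn ⟨0, by constructor <;> linarith⟩
      hcont.continuousOn
  refine ⟨t0, fun lam => ?_⟩
  have hmin0 : ‖v + t0 • u‖ ≤ ‖v‖ := by
    simpa using ht0min (show (0:ℝ) ∈ Set.Icc (-R) R by constructor <;> linarith)
  have key : ∀ s : ℝ, ‖v + t0 • u‖ ≤ ‖v + s • u‖ := by
    intro s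
    by_cases hs : s ∈ Set.Icc (-R) R
    · exact ht0min hs
    · have habs : R < |s| := by
        rw [Set.mem_Icc, not_and_or] at hs
        push_neg at hs
        rcases hs with h1 | h2
        · calc R < -s := by linarith
            _ ≤ |s| := neg_le_abs s
        · exact lt_of_lt_of_le h2 (le_abs_self s)
      have h1 : 2 * ‖v‖ + ‖u‖ < |s| * ‖u‖ := by
        calc 2 * ‖v‖ + ‖u‖ = R * ‖u‖ := by rw [hR, div_mul_cancel₀ _ (ne_of_gt hupos)]
          _ < |s| * ‖u‖ := by exact mul_lt_mul_of_pos_right habs hupos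
      have h2 : ‖v + s • u‖ ≥ |s| * ‖u‖ - ‖v‖ := by
        have := norm_sub_norm_le (s • u) (-v)
        calc ‖v + s • u‖ = ‖s • u - -v‖ := by rw [sub_neg_eq_add, add_comm]
          _ ≥ ‖s • u‖ - ‖-v‖ := norm_sub_norm_le _ _
          _ = |s| * ‖u‖ - ‖v‖ := by rw [norm_smul, Real.norm_eq_abs, norm_neg]
      calc ‖v + t0 • u‖ ≤ ‖v‖ := hmin0
        _ ≤ ‖v + s • u‖ := by linarith
  have := key (t0 + lam)
  calc ‖v + t0 • u‖ ≤ ‖v + (t0 + lam) • u‖ := this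
    _ = ‖v + t0 • u + lam • u‖ := by rw [add_smul]; abel_nf

theorem isCompactOperator_smulRight' {X Y : Type*} [NormedAddCommGroup X] [NormedSpace ℝ X]
    [NormedAddCommGroup Y] [NormedSpace ℝ Y] (ψ : X →L[ℝ] ℝ) (z : Y) :
    IsCompactOperator (ψ.smulRight z) := by
  refine ⟨(fun c : ℝ => c • z) '' Set.Icc (-1) 1, ?_, ?_⟩
  · exact (isCompact_Icc).image (continuous_id.smul continuous_const)
  · have hsub : ψ ⁻¹' Set.Icc (-1) 1 ⊆ (ψ.smulRight z) ⁻¹' ((fun c : ℝ => c • z) '' Set.Icc (-1) 1) := by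
      intro v hv
      exact ⟨ψ v, hv, rfl⟩
    have hnhds : ψ ⁻¹' Set.Icc (-1) 1 ∈ nhds (0 : X) := by
      apply ψ.continuous.continuousAt.preimage_mem_nhds
      rw [map_zero]
      exact Icc_mem_nhds (by norm_num) (by norm_num)
    exact Filter.mem_of_superset hnhds hsub

theorem exists_norm_attain' {X : Type*} [NormedAddCommGroup X] [NormedSpace ℝ X]
    (hX : Function.Surjective (NormedSpace.inclusionInDoubleDual ℝ X))
    (T : X →L[ℝ] X) (hTc : IsCompactOperator T) (hT : ‖T‖ = 1) :
    ∃ x0 : X, ‖x0‖ = 1 ∧ ‖T x0‖ = 1 := by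
  classical
  set J := NormedSpace.inclusionInDoubleDual ℝ X with hJ
  have hJnorm : ∀ x : X, ‖J x‖ = ‖x‖ := fun x =>
    (NormedSpace.inclusionInDoubleDualLi ℝ (E := X)).norm_map x
  have hJinj : Function.Injective J := by
    intro a b hab
    have : ‖J (a - b)‖ = 0 := by
      rw [hJnorm, (NormedSpace.inclusionInDoubleDualLi ℝ (E := X)).injective hab, sub_self, norm_zero]
    rw [hJnorm] at this
    exact sub_eq_zero.mp (norm_eq_zero.mp this)
  set Jinv : StrongDual ℝ (StrongDual ℝ X) → X := fun η => Classical.choose (hX η) with hJinvdef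
  have hJinv : ∀ η, J (Jinv η) = η := fun η => Classical.choose_spec (hX η)
  have hJinv_norm : ∀ η, ‖Jinv η‖ = ‖η‖ := fun η => by rw [← hJnorm (Jinv η), hJinv]
  have hJinvJ : ∀ x, Jinv (J x) = x := fun x => hJinj (hJinv (J x))
  -- the compact set C
  have hTc' : IsCompactOperator (T : X →ₗ[ℝ] X) := hTc
  have hC : IsCompact (closure ((T : X →ₗ[ℝ] X) '' closedBall 0 1)) :=
    IsCompactOperator.isCompact_closure_image_closedBall (𝕜₁ := ℝ) hTc' 1
  set C : Set X := closure ((T : X →ₗ[ℝ] X) '' closedBall 0 1) with hCdef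
  -- the weak-star compact ball
  set s : Set (WeakDual ℝ (StrongDual ℝ X)) := WeakDual.toStrongDual ⁻¹' closedBall 0 1 with hsdef
  have hscomp : IsCompact s := WeakDual.isCompact_closedBall 0 1
  have hsne : s.Nonempty := ⟨0, by simp [hsdef]⟩
  -- the function
  set f : WeakDual ℝ (StrongDual ℝ X) → X := fun ξ => T (Jinv (WeakDual.toStrongDual ξ)) with hfdef
  have hmem : ∀ ξ ∈ s, f ξ ∈ C := by
    intro ξ hξ
    apply subset_closure
    refine ⟨Jinv (WeakDual.toStrongDual ξ), ?_, rfl⟩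
    rw [mem_closedBall_zero_iff, hJinv_norm]
    exact (mem_closedBall_zero_iff (E := StrongDual ℝ (StrongDual ℝ X))).mp
      (show WeakDual.toStrongDual ξ ∈ closedBall (0 : StrongDual ℝ (StrongDual ℝ X)) 1 from hξ)
  -- continuity of f restricted to s
  have hgf : ∀ g : StrongDual ℝ X, Continuous fun ξ : s => g (f ξ.val) := by
    intro g
    have heq : ∀ ξ : s, g (f ξ.val) = (WeakDual.toStrongDual ξ.val) (g.comp T) := by
      intro ξ
      have : g (f ξ.val) = (J (Jinv (WeakDual.toStrongDual ξ.val))) (g.comp T) := by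
        rw [hJ, NormedSpace.dual_def]
        rfl
      rw [this, hJinv]
    simp only [heq]
    exact (WeakDual.eval_continuous (g.comp T)).comp continuous_subtype_val
  have hfc : Continuous fun ξ : s => f ξ.val := by
    haveI : CompactSpace C := isCompact_iff_compactSpace.mp hC
    set e : C → ((StrongDual ℝ X) → ℝ) := fun c g => g c.val with hedef
    have he_cont : Continuous e :=
      continuous_pi fun g => g.continuous.comp continuous_subtype_val
    have he_inj : Function.Injective e := by
      intro a b hab
      apply Subtype.ext
      rw [NormedSpace.eq_iff_forall_dual_eq ℝ]
      intro g
      exact congrFun hab g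
    have hemb := he_cont.isClosedEmbedding he_inj
    set f' : s → C := fun ξ => ⟨f ξ.val, hmem ξ.val ξ.prop⟩ with hf'def
    have : Continuous (e ∘ f') := by
      apply continuous_pi
      intro g
      exact hgf g
    have hf'c : Continuous f' := (hemb.isEmbedding.continuous_iff).mpr this
    exact continuous_subtype_val.comp hf'c
  -- extreme value theorem
  have hFcont : ContinuousOn (fun ξ => ‖f ξ‖) s := by
    rw [continuousOn_iff_continuous_restrict]
    exact hfc.norm
  obtain ⟨ξ0, hξ0s, hmax⟩ := hscomp.exists_isMaxOn hsne hFcont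
  set x0 : X := Jinv (WeakDual.toStrongDual ξ0) with hx0def
  have hx0le : ‖x0‖ ≤ 1 := by
    rw [hx0def, hJinv_norm]
    exact (mem_closedBall_zero_iff (E := StrongDual ℝ (StrongDual ℝ X))).mp
      (show WeakDual.toStrongDual ξ0 ∈ closedBall (0 : StrongDual ℝ (StrongDual ℝ X)) 1 from hξ0s)
  have hub : ∀ x : X, ‖x‖ ≤ 1 → ‖T x‖ ≤ ‖T x0‖ := by
    intro x hx
    have hmemx : (J x : WeakDual ℝ (StrongDual ℝ X)) ∈ s := by
      simp only [hsdef, Set.mem_preimage, mem_closedBall_zero_iff]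
      refine (mem_closedBall_zero_iff (a := WeakDual.toStrongDual (J x : WeakDual ℝ (StrongDual ℝ X)))).mpr ?_
      show ‖J x‖ ≤ 1
      rw [hJnorm]; exact hx
    have := hmax hmemx
    have h' : ‖T (Jinv (J x))‖ ≤ ‖T x0‖ := this
    rwa [hJinvJ] at h'
  have hTnorm_le : ‖T‖ ≤ ‖T x0‖ := by
    refine ContinuousLinearMap.opNorm_le_bound _ (norm_nonneg _) (fun x => ?_)
    rcases eq_or_ne x 0 with rfl | hx
    · simp
    · have hxpos : (0:ℝ) < ‖x‖ := norm_pos_iff.mpr hx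
      have hu : ‖(‖x‖⁻¹ • x : X)‖ ≤ 1 := by
        rw [norm_smul, norm_inv, norm_norm, inv_mul_cancel₀ (ne_of_gt hxpos)]
      have := hub _ hu
      rw [map_smul, norm_smul, norm_inv, norm_norm] at this
      calc ‖T x‖ = ‖x‖ * (‖x‖⁻¹ * ‖T x‖) := by field_simp
        _ ≤ ‖x‖ * ‖T x0‖ := by
            exact mul_le_mul_of_nonneg_left this (norm_nonneg x)
        _ = ‖T x0‖ * ‖x‖ := mul_comm _ _
  have h1 : (1:ℝ) ≤ ‖T x0‖ := hT ▸ hTnorm_le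
  have h2 : ‖T x0‖ ≤ ‖x0‖ := by
    calc ‖T x0‖ ≤ ‖T‖ * ‖x0‖ := T.le_opNorm x0
      _ = ‖x0‖ := by rw [hT, one_mul]
  refine ⟨x0, le_antisymm hx0le (le_trans h1 h2), le_antisymm (le_trans h2 hx0le) h1⟩

/-- over ℝ, `exists_dual_vector` without the coercion -/
theorem exists_dual_vector_real {E : Type*} [NormedAddCommGroup E] [NormedSpace ℝ E]
    (x : E) (hx : x ≠ 0) : ∃ g : E →L[ℝ] ℝ, ‖g‖ = 1 ∧ g x = ‖x‖ := by
  obtain ⟨g, hg1, hg2⟩ := exists_dual_vector ℝ x (norm_ne_zero_iff.mpr hx)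
  exact ⟨g, hg1, by rw [hg2]; simp [RCLike.ofReal_real_eq_id]⟩

end AuxiliaryLemmas

set_option maxHeartbeats 2000000 in
/-- Let `X` be a smooth reflexive Banach space and `T : X → X` a norm-one compact
operator that is a smooth point of the space of compact operators on `X` (with the operator
norm). Then either the range of `T` is one-dimensional, or `T` is not a right-symmetric point
of the space of compact operators on `X`. -/
theorem rankOne_or_not_rightSymmetric_of_smooth_operator {X : Type*}
    [NormedAddCommGroup X] [NormedSpace ℝ X] [CompleteSpace X]
    (hX : ReflexiveSpace X)
    (hsmooth : ∀ x : X, x ≠ 0 → SmoothPoint x)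
    (T : X →L[ℝ] X) (hTc : IsCompactOperator T) (hT : ‖T‖ = 1)
    (hTsm : SmoothPoint (⟨T, hTc⟩ : compactOperators X X)) :
    Module.finrank ℝ (LinearMap.range (T : X →ₗ[ℝ] X)) = 1 ∨ ¬ RightSymmetricCompactOp T := by
  classical
  by_cases hrank : Module.finrank ℝ (LinearMap.range (T : X →ₗ[ℝ] X)) = 1
  · exact Or.inl hrank
  right
  intro hsym
  -- norm attainment
  obtain ⟨x0, hx0, hTx0⟩ := exists_norm_attain' hX T hTc hT
  set s : X := T x0 with hsdef
  have hs1 : ‖s‖ = 1 := hTx0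
  have hsne : s ≠ 0 := by
    intro h0; rw [h0, norm_zero] at hs1; norm_num at hs1
  obtain ⟨g, hg1, hgs'⟩ := exists_dual_vector_real s hsne
  have hgs : g s = 1 := by rw [hgs', hs1]
  -- the compact operators and the norming functional structure
  set K := compactOperators X X with hKdef
  set Tk : K := ⟨T, hTc⟩ with hTkdef
  have hTknorm : ‖Tk‖ = 1 := by rw [Submodule.coe_norm]; exact hT
  have hTkne : Tk ≠ 0 := by
    intro h0; rw [h0] at hTknorm; simp at hTknorm
  letI : NormedAddCommGroup K := Submodule.normedAddCommGroup K
  letI : NormedSpace ℝ K := Submodule.normedSpace K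
  set φ : K →L[ℝ] ℝ :=
    g.comp ((ContinuousLinearMap.apply ℝ X x0).comp K.subtypeL) with hφdef
  have hφapp : ∀ A : K, φ A = g ((A : X →L[ℝ] X) x0) := fun A => rfl
  have hφT : φ Tk = 1 := by rw [hφapp]; exact hgs
  have hφnorm : ‖φ‖ = 1 := by
    apply le_antisymm
    · refine ContinuousLinearMap.opNorm_le_bound _ zero_le_one (fun A => ?_)
      rw [hφapp, one_mul]
      have h1 : ‖g ((A : X →L[ℝ] X) x0)‖ ≤ ‖(A : X →L[ℝ] X) x0‖ := by
        simpa [hg1] using g.le_opNorm ((A : X →L[ℝ] X) x0)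
      have h2 : ‖(A : X →L[ℝ] X) x0‖ ≤ ‖(A : X →L[ℝ] X)‖ := by
        simpa [hx0] using (A : X →L[ℝ] X).le_opNorm x0
      rw [← Submodule.coe_norm] at h2
      linarith
    · have := φ.le_opNorm Tk
      rw [hφT, hTknorm, mul_one] at this
      calc (1:ℝ) = ‖(1:ℝ)‖ := by norm_num
        _ ≤ ‖φ‖ := this
  obtain ⟨f0, hf0P, hf0uniq⟩ := hTsm
  have hφf0 : φ = f0 := hf0uniq φ ⟨hφnorm, by rw [hφT, hTknorm]⟩
  -- STEP A
  have stepA : ∀ w : X, ‖w - x0‖ < 1/2 → ∀ z : X, BJOrth z (T w) → g z = 0 := by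
    intro w hw z hz
    by_contra hgz
    have hzne : z ≠ 0 := fun h0 => hgz (by rw [h0, map_zero])
    have hwnorm : (1:ℝ)/2 < ‖w‖ := by
      have h1 : ‖x0‖ - ‖w - x0‖ ≤ ‖w‖ := by
        have := norm_sub_norm_le x0 (x0 - w)
        calc ‖x0‖ - ‖w - x0‖ = ‖x0‖ - ‖x0 - w‖ := by rw [norm_sub_rev]
          _ ≤ ‖x0 - (x0 - w)‖ := norm_sub_norm_le _ _
          _ = ‖w‖ := by rw [sub_sub_cancel]
      rw [hx0] at h1; linarith
    have hwne : w ≠ 0 := by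
      intro h0; rw [h0, norm_zero] at hwnorm; linarith
    obtain ⟨ψ, hψ1, hψw⟩ := exists_dual_vector_real w hwne
    have hψx0 : 0 < ψ x0 := by
      have hb : ψ (w - x0) ≤ ‖w - x0‖ := by
        calc ψ (w - x0) ≤ ‖ψ (w - x0)‖ := le_abs_self _
          _ ≤ ‖ψ‖ * ‖w - x0‖ := ψ.le_opNorm _
          _ = ‖w - x0‖ := by rw [hψ1, one_mul]
      have heq : ψ x0 = ‖w‖ - ψ (w - x0) := by
        rw [← hψw, map_sub]; ring
      rw [heq]; linarith
    set A : X →L[ℝ] X := ψ.smulRight z with hAdef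
    have hAc : IsCompactOperator A := isCompactOperator_smulRight' ψ z
    have hAnorm : ‖A‖ = ‖z‖ := by
      rw [hAdef, ContinuousLinearMap.norm_smulRight_apply, hψ1, one_mul]
    have hAT : BJOrth A T := by
      intro lam
      have hwpos : (0:ℝ) < ‖w‖ := by linarith
      have happ0 : (A + lam • T) w = ‖w‖ • z + lam • T w := by
        rw [ContinuousLinearMap.add_apply, ContinuousLinearMap.smul_apply,
          hAdef, ContinuousLinearMap.smulRight_apply, hψw]
      have happ : (A + lam • T) w = ‖w‖ • (z + (lam / ‖w‖) • T w) := by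
        rw [happ0, smul_add, smul_smul, mul_div_cancel₀ _ (ne_of_gt hwpos)]
      have h1 : ‖w‖ * ‖z‖ ≤ ‖(A + lam • T) w‖ := by
        rw [happ, norm_smul, Real.norm_eq_abs, abs_of_pos hwpos]
        exact mul_le_mul_of_nonneg_left (hz (lam / ‖w‖)) (le_of_lt hwpos)
      have h2 : ‖(A + lam • T) w‖ ≤ ‖A + lam • T‖ * ‖w‖ := (A + lam • T).le_opNorm w
      rw [hAnorm]
      have h3 : ‖z‖ * ‖w‖ ≤ ‖A + lam • T‖ * ‖w‖ := by
        calc ‖z‖ * ‖w‖ = ‖w‖ * ‖z‖ := mul_comm _ _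
          _ ≤ ‖A + lam • T‖ * ‖w‖ := h1.trans h2
      exact le_of_mul_le_mul_right h3 hwpos
    have hTA : BJOrth T A := hsym A hAc hAT
    set Ak : K := ⟨A, hAc⟩ with hAkdef
    have hTAk : BJOrth Tk Ak := by
      intro lam
      have hcoe : ((Tk + lam • Ak : K) : X →L[ℝ] X) = T + lam • A := rfl
      rw [Submodule.coe_norm, Submodule.coe_norm, hcoe]
      exact hTA lam
    obtain ⟨h, hh1, hh2, hh3⟩ := bj_exists_norming' hTkne hTAk
    have hhf0 : h = f0 := hf0uniq h ⟨hh1, hh2⟩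
    have hφAk : φ Ak = 0 := by rw [hφf0, ← hhf0]; exact hh3
    have : φ Ak = ψ x0 * g z := by
      rw [hφapp]
      show g (A x0) = ψ x0 * g z
      rw [hAdef, ContinuousLinearMap.smulRight_apply, map_smul, smul_eq_mul]
    rw [this] at hφAk
    rcases mul_eq_zero.mp hφAk with h' | h'
    · linarith
    · exact hgz h'
  -- STEP B
  have stepB : ∀ v : X, g v = 0 → ∀ w : X, ‖w - x0‖ < 1/2 → BJOrth v (T w) := by
    intro v hv w hw
    by_cases hTw : T w = 0
    · intro lam; simp [hTw]
    · obtain ⟨t, ht⟩ := bj_exists_min' v (T w) hTw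
      have hgTw : (0:ℝ) < g (T w) := by
        have hb : |g (T w) - 1| ≤ ‖w - x0‖ := by
          have heq1 : g (T w) - 1 = g (T w - s) := by rw [map_sub, hgs]
          rw [heq1, ← Real.norm_eq_abs]
          calc ‖g (T w - s)‖ ≤ ‖g‖ * ‖T w - s‖ := g.le_opNorm _
            _ = ‖T w - s‖ := by rw [hg1, one_mul]
            _ = ‖T (w - x0)‖ := by rw [hsdef, ← map_sub]
            _ ≤ ‖T‖ * ‖w - x0‖ := T.le_opNorm _
            _ = ‖w - x0‖ := by rw [hT, one_mul]
        rw [abs_le] at hb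
        linarith
      have hgz := stepA w hw (v + t • T w) ht
      have : t * g (T w) = 0 := by
        rw [map_add, map_smul, smul_eq_mul, hv, zero_add] at hgz
        exact hgz
      have ht0 : t = 0 := by
        rcases mul_eq_zero.mp this with h' | h'
        · exact h'
        · linarith
      rwa [ht0, zero_smul, add_zero] at ht
  -- STEP C
  have stepC : ∀ v : X, g v = 0 → v ≠ 0 → ∀ h : X →L[ℝ] ℝ, ‖h‖ = 1 → h v = ‖v‖ →
      ∀ y : X, h (T y) = 0 := by
    intro v hv hvne h hh1 hh2 y
    obtain ⟨fv, hfvP, hfvuniq⟩ := hsmooth v hvne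
    have hhfv : h = fv := hfvuniq h ⟨hh1, hh2⟩
    have hTw0 : ∀ w : X, ‖w - x0‖ < 1/2 → h (T w) = 0 := by
      intro w hw
      obtain ⟨h', h'1, h'2, h'3⟩ := bj_exists_norming' hvne (stepB v hv w hw)
      have : h' = fv := hfvuniq h' ⟨h'1, h'2⟩
      rw [hhfv, ← this]
      exact h'3
    have h0 : h (T x0) = 0 := hTw0 x0 (by rw [sub_self, norm_zero]; norm_num)
    set δ : ℝ := 1 / (2 * (‖y‖ + 1)) with hδdef
    have hypos : (0:ℝ) < ‖y‖ + 1 := by positivity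
    have hδpos : 0 < δ := by positivity
    have hmem : ‖(x0 + δ • y) - x0‖ < 1/2 := by
      rw [add_sub_cancel_left, norm_smul, Real.norm_eq_abs, abs_of_pos hδpos, hδdef]
      rw [div_mul_eq_mul_div, one_mul, div_lt_div_iff₀ (by positivity) (by norm_num)]
      nlinarith [norm_nonneg y]
    have hw := hTw0 _ hmem
    rw [map_add, map_smul, map_add, map_smul, h0, zero_add, smul_eq_mul] at hw
    rcases mul_eq_zero.mp hw with h' | h'
    · linarith
    · exact h'
  -- FINAL
  have hy1 : ∃ y1 : X, T y1 ∉ Submodule.span ℝ {s} := by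
    by_contra hall
    push_neg at hall
    apply hrank
    have hle : LinearMap.range (T : X →ₗ[ℝ] X) ≤ Submodule.span ℝ {s} := by
      rintro _ ⟨y, rfl⟩
      exact hall y
    have hge : Submodule.span ℝ {s} ≤ LinearMap.range (T : X →ₗ[ℝ] X) := by
      rw [Submodule.span_le]
      rintro _ rfl
      exact ⟨x0, rfl⟩
    rw [le_antisymm hle hge]
    exact finrank_span_singleton hsne
  obtain ⟨y1, hy1⟩ := hy1
  set v0 : X := T y1 - g (T y1) • s with hv0def
  have hv0g : g v0 = 0 := by
    rw [hv0def, map_sub, map_smul, smul_eq_mul, hgs, mul_one, sub_self]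
  have hv0ne : v0 ≠ 0 := by
    intro h0
    apply hy1
    rw [hv0def, sub_eq_zero] at h0
    exact Submodule.mem_span_singleton.mpr ⟨g (T y1), h0.symm⟩
  obtain ⟨fv, ⟨hfv1, hfv2⟩, _⟩ := hsmooth v0 hv0ne
  have := stepC v0 hv0g hv0ne fv hfv1 hfv2 (y1 - g (T y1) • x0)
  have hTv : T (y1 - g (T y1) • x0) = v0 := by
    rw [map_sub, map_smul, hv0def, hsdef]
  rw [hTv, hfv2] at this
  exact hv0ne (norm_eq_zero.mp this)
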